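/- Let P be the path on vertices v_0,...,v_n. Let ω : V → ℕ be a weight function and L a 'waterfall' list assignment (i.e., L(i) ∩ L(j) = ∅ whenever |i−j| ≥ 2). Then there exists an assignment c with c(i) ⊆ L(i), |c(i)| = ω(i) and c(i) ∩ c(i+1) = ∅ for all i, if and only if for all 0 ≤ i ≤ j ≤ n the amplitude satisfies |⋃_{k=i}^{j} L(k)| ≥ Σ_{k=i}^{j} ω(k). -/

import Mathlib

/-- `P_{n+1}` is `(L,ω)`-choosable: each vertex `i ∈ {0,…,n}` gets `c i ⊆ L i`
with `|c i| = ω i` and consecutive chosen sets disjoint. -/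
def PathChoosable (n : ℕ) (L : ℕ → Finset ℕ) (ω : ℕ → ℕ) : Prop :=
  ∃ c : ℕ → Finset ℕ, (∀ i ≤ n, c i ⊆ L i ∧ (c i).card = ω i) ∧
    ∀ i, i < n → Disjoint (c i) (c (i + 1))

/-- `L` is a waterfall list on `{0,…,n}`: lists at distance `≥ 2` are disjoint. -/
def Waterfall (n : ℕ) (L : ℕ → Finset ℕ) : Prop :=
  ∀ i ≤ n, ∀ j ≤ n, i + 2 ≤ j → Disjoint (L i) (L j)

private lemma sum_Icc_bot (i j : ℕ) (h : i ≤ j) (ω : ℕ → ℕ) :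
    ∑ k ∈ Finset.Icc i j, ω k = ω i + ∑ k ∈ Finset.Icc (i+1) j, ω k := by
  rw [show Finset.Icc i j = insert i (Finset.Icc (i+1) j) by ext x; simp; omega]
  rw [Finset.sum_insert (by simp)]

/-- The greedy construction step by step, by induction on `m = n - i`. -/
private lemma aux (n : ℕ) (L : ℕ → Finset ℕ) (ω : ℕ → ℕ) (hw : Waterfall n L)
    (hA : ∀ i j, i ≤ j → j ≤ n →
      ((Finset.Icc i j).biUnion L).card ≥ ∑ k ∈ Finset.Icc i j, ω k) :
    ∀ m i, i + m = n → ∀ prev : Finset ℕ,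
      (∀ j, i ≤ j → j ≤ n →
        (((Finset.Icc i j).biUnion L) \ prev).card ≥ ∑ k ∈ Finset.Icc i j, ω k) →
      ∃ c : ℕ → Finset ℕ, (∀ k, i ≤ k → k ≤ n → c k ⊆ L k ∧ (c k).card = ω k) ∧
        Disjoint prev (c i) ∧
        ∀ k, i ≤ k → k < n → Disjoint (c k) (c (k + 1)) := by
  intro m
  induction m with
  | zero =>
    intro i hi prev hinv
    have hii : i = n := by omega
    have h1 := hinv i le_rfl (by omega)
    simp only [Finset.Icc_self, Finset.singleton_biUnion, Finset.sum_singleton] at h1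
    obtain ⟨t, hts, htc⟩ := Finset.exists_subset_card_eq h1
    refine ⟨fun _ => t, ?_, ?_, ?_⟩
    · intro k hk1 hk2
      have : k = i := by omega
      subst this
      exact ⟨hts.trans (Finset.sdiff_subset), htc⟩
    · exact Finset.disjoint_right.2 fun a ha => (Finset.mem_sdiff.1 (hts ha)).2
    · intro k hk1 hk2; omega
  | succ m ih =>
    intro i hi prev hinv
    have hin : i < n := by omega
    -- available colors at vertex i
    set avail := L i \ prev with havail_def
    set s₁ := avail \ L (i+1) with hs₁_def
    have havail : ω i ≤ avail.card := by
      have h1 := hinv i le_rfl (by omega)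
      simpa only [Finset.Icc_self, Finset.singleton_biUnion, Finset.sum_singleton] using h1
    -- choose ci ⊆ avail with card ω i minimizing intersection with L (i+1)
    have key : ∃ ci : Finset ℕ, ci ⊆ avail ∧ ci.card = ω i ∧
        ∀ j, i + 1 ≤ j → j ≤ n →
          ∑ k ∈ Finset.Icc (i+1) j, ω k + (ci ∩ L (i+1)).card ≤
            ((Finset.Icc (i+1) j).biUnion L).card := by
      by_cases hc : ω i ≤ s₁.card
      · obtain ⟨ci, hsub, hcard⟩ := Finset.exists_subset_card_eq hc
        refine ⟨ci, hsub.trans (Finset.sdiff_subset), hcard, ?_⟩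
        intro j hj1 hj2
        have hdisj : ci ∩ L (i+1) = ∅ := by
          rw [Finset.eq_empty_iff_forall_notMem]
          intro x hx
          rw [Finset.mem_inter] at hx
          exact (Finset.mem_sdiff.1 (hsub hx.1)).2 hx.2
        rw [hdisj]
        simpa using hA (i+1) j hj1 hj2
      · push_neg at hc
        have hsplit : s₁.card + (avail ∩ L (i+1)).card = avail.card :=
          Finset.card_sdiff_add_card_inter avail (L (i+1))
        have ht : ω i - s₁.card ≤ (avail ∩ L (i+1)).card := by omega
        obtain ⟨t, hts, htc⟩ := Finset.exists_subset_card_eq ht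
        have hdisj : Disjoint s₁ t := by
          rw [Finset.disjoint_right]
          intro x hx
          have := (Finset.mem_inter.1 (hts hx)).2
          simp only [hs₁_def, Finset.mem_sdiff, not_and, not_not]
          intro _; exact this
        refine ⟨s₁ ∪ t, ?_, ?_, ?_⟩
        · exact Finset.union_subset Finset.sdiff_subset
            (hts.trans (Finset.inter_subset_left))
        · rw [Finset.card_union_of_disjoint hdisj, htc]; omega
        · intro j hj1 hj2
          -- (s₁ ∪ t) ∩ L (i+1) ⊆ t
          have hint : ((s₁ ∪ t) ∩ L (i+1)).card ≤ ω i - s₁.card := by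
            rw [← htc]
            apply Finset.card_le_card
            intro x hx
            rw [Finset.mem_inter, Finset.mem_union] at hx
            rcases hx.1 with h | h
            · exact absurd hx.2 (Finset.mem_sdiff.1 h).2
            · exact h
          -- A(i,j) \ prev ⊆ A(i+1,j) ∪ s₁
          have hsub : ((Finset.Icc i j).biUnion L) \ prev ⊆
              ((Finset.Icc (i+1) j).biUnion L) ∪ s₁ := by
            intro x hx
            rw [Finset.mem_sdiff, Finset.mem_biUnion] at hx
            obtain ⟨⟨k, hk, hxk⟩, hxp⟩ := hx
            rw [Finset.mem_Icc] at hk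
            rw [Finset.mem_union, Finset.mem_biUnion]
            by_cases hki : i + 1 ≤ k
            · exact Or.inl ⟨k, Finset.mem_Icc.2 ⟨hki, hk.2⟩, hxk⟩
            · have hki' : k = i := by omega
              rw [hki'] at hxk
              by_cases hx1 : x ∈ L (i+1)
              · exact Or.inl ⟨i+1, Finset.mem_Icc.2 ⟨le_refl _, hj1⟩, hx1⟩
              · exact Or.inr (by
                  simp only [hs₁_def, havail_def, Finset.mem_sdiff]
                  exact ⟨⟨hxk, hxp⟩, hx1⟩)
          have h1 := hinv j (by omega) hj2
          have h2 : (((Finset.Icc i j).biUnion L) \ prev).card ≤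
              ((Finset.Icc (i+1) j).biUnion L).card + s₁.card :=
            le_trans (Finset.card_le_card hsub) (Finset.card_union_le _ _)
          have h3 := sum_Icc_bot i j (by omega) ω
          omega
    obtain ⟨ci, hcisub, hcicard, hkey⟩ := key
    -- establish the invariant at i+1 with prev := ci
    have hinv' : ∀ j, i + 1 ≤ j → j ≤ n →
        (((Finset.Icc (i+1) j).biUnion L) \ ci).card ≥ ∑ k ∈ Finset.Icc (i+1) j, ω k := by
      intro j hj1 hj2
      have hint : ((Finset.Icc (i+1) j).biUnion L) ∩ ci ⊆ ci ∩ L (i+1) := by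
        intro x hx
        rw [Finset.mem_inter, Finset.mem_biUnion] at hx
        obtain ⟨⟨k, hk, hxk⟩, hxc⟩ := hx
        rw [Finset.mem_Icc] at hk
        rw [Finset.mem_inter]
        refine ⟨hxc, ?_⟩
        have hxi : x ∈ L i := (hcisub.trans Finset.sdiff_subset) hxc
        by_cases hk1 : k = i + 1
        · subst hk1; exact hxk
        · have hik : i + 2 ≤ k := by omega
          exact absurd hxk (Finset.disjoint_left.1
            (hw i (by omega) k (by omega) hik) hxi)
      have h1 : (((Finset.Icc (i+1) j).biUnion L) \ ci).card
          + (((Finset.Icc (i+1) j).biUnion L) ∩ ci).card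
          = ((Finset.Icc (i+1) j).biUnion L).card :=
        Finset.card_sdiff_add_card_inter _ _
      have h2 := Finset.card_le_card hint
      have h3 := hkey j hj1 hj2
      omega
    obtain ⟨c', hc'1, hc'2, hc'3⟩ := ih (i+1) (by omega) ci hinv'
    refine ⟨fun k => if k = i then ci else c' k, ?_, ?_, ?_⟩
    · intro k hk1 hk2
      by_cases hk : k = i
      · simp only [hk, if_pos rfl]
        exact ⟨hcisub.trans Finset.sdiff_subset, hcicard⟩
      · simp only [if_neg hk]
        exact hc'1 k (by omega) hk2
    · simp only [if_pos rfl]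
      exact Finset.disjoint_right.2 fun a ha => (Finset.mem_sdiff.1 (hcisub ha)).2
    · intro k hk1 hk2
      by_cases hk : k = i
      · simp only [hk, if_pos rfl, if_neg (by omega : ¬ i + 1 = i)]
        exact hc'2
      · simp only [if_neg hk, if_neg (by omega : ¬ k + 1 = i)]
        exact hc'3 k (by omega) hk2

theorem waterfall_choosable_iff_amplitude (n : ℕ) (L : ℕ → Finset ℕ) (ω : ℕ → ℕ)
    (hw : Waterfall n L) :
    PathChoosable n L ω ↔
      ∀ i j, i ≤ j → j ≤ n →
        ((Finset.Icc i j).biUnion L).card ≥ ∑ k ∈ Finset.Icc i j, ω k := by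
  constructor
  · rintro ⟨c, hc, hd⟩ i j hij hjn
    -- the chosen sets are pairwise disjoint on Icc i j
    have hpd : ∀ a ∈ Finset.Icc i j, ∀ b ∈ Finset.Icc i j, a ≠ b →
        Disjoint (c a) (c b) := by
      have hlt : ∀ a b, a < b → b ≤ n → Disjoint (c a) (c b) := by
        intro a b hab hbn
        by_cases h1 : b = a + 1
        · subst h1; exact hd a (by omega)
        · exact Finset.disjoint_of_subset_left (hc a (by omega)).1
            (Finset.disjoint_of_subset_right (hc b hbn).1
              (hw a (by omega) b hbn (by omega)))
      intro a ha b hb hab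
      rw [Finset.mem_Icc] at ha hb
      rcases lt_or_gt_of_ne hab with h | h
      · exact hlt a b h (by omega)
      · exact (hlt b a h (by omega)).symm
    calc ∑ k ∈ Finset.Icc i j, ω k
        = ∑ k ∈ Finset.Icc i j, (c k).card := by
          apply Finset.sum_congr rfl
          intro k hk
          rw [Finset.mem_Icc] at hk
          exact ((hc k (by omega)).2).symm
      _ = ((Finset.Icc i j).biUnion c).card := (Finset.card_biUnion hpd).symm
      _ ≤ ((Finset.Icc i j).biUnion L).card := by
          apply Finset.card_le_card
          intro x hx
          rw [Finset.mem_biUnion] at hx ⊢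
          obtain ⟨k, hk, hxk⟩ := hx
          have hkn : k ≤ n := by rw [Finset.mem_Icc] at hk; omega
          exact ⟨k, hk, (hc k hkn).1 hxk⟩
  · intro hA
    obtain ⟨c, hc1, _, hc3⟩ := aux n L ω hw hA n 0 (by omega) ∅
      (by intro j hj1 hj2; simpa using hA 0 j hj1 hj2)
    exact ⟨c, fun i hi => hc1 i (Nat.zero_le i) hi, fun i hi => hc3 i (Nat.zero_le i) hi⟩
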